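/- arXiv:2409.20402 — 4 statements merged into one kernel-verified Lean document; each statement's English description precedes it below -/
import Mathlib

section
/- For z ∈ U, one has 4ρ(z)/(|z|+1)^2 ≤ ρ(z)/|ρ(z,𝐢)|^2 ≤ 4 min{ ρ(z), |z|/(|z|^2+1) }; consequently ρ(z)/|ρ(z,𝐢)|^2 → 0 if and only if either ρ(z) → 0 or |z| → ∞. -/
open Complex MeasureTheory Filter ComplexConjugate

noncomputable section

abbrev Cm (m : ℕ) := Fin m → ℂ

/-- squared Euclidean norm of `z' ∈ ℂ^{n-1}` -/
def nsq {m : ℕ} (a : Cm m) : ℝ := ∑ j, Complex.normSq (a j)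

/-- defining function `ρ(z) = Im z_n - |z'|²` of the Siegel upper half-space -/
def rho {m : ℕ} (z : Cm m × ℂ) : ℝ := z.2.im - nsq z.1

/-- `ρ(z,w) = (i/2)(conj w_n - z_n) - z'·conj w'` -/
def rho2 {m : ℕ} (z w : Cm m × ℂ) : ℂ :=
  (I / 2) * (conj w.2 - z.2) - ∑ j, z.1 j * conj (w.1 j)

/-- the Siegel upper half-space `U` -/
def Siegel (m : ℕ) : Set (Cm m × ℂ) := {z | 0 < rho z}

/-- the point `𝐢 = (0', i)` -/
def iPt (m : ℕ) : Cm m × ℂ := (0, I)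

/-- Euclidean norm of a point of ℂⁿ = ℂ^{n-1} × ℂ -/
def normz {m : ℕ} (z : Cm m × ℂ) : ℝ := Real.sqrt (nsq z.1 + Complex.normSq z.2)

lemma rho2_iPt_sq {m : ℕ} (z : Cm m × ℂ) :
    ‖rho2 z (iPt m)‖ ^ 2 = (z.2.re ^ 2 + (z.2.im + 1) ^ 2) / 4 := by
  have h : rho2 z (iPt m) = ⟨(z.2.im + 1) / 2, -z.2.re / 2⟩ := by
    apply Complex.ext <;> simp [rho2, iPt] <;> ring
  rw [h, Complex.sq_norm, Complex.normSq_apply]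
  simp only []
  ring

lemma nsq_nonneg {m : ℕ} (a : Cm m) : 0 ≤ nsq a :=
  Finset.sum_nonneg fun j _ => Complex.normSq_nonneg _

lemma normz_nonneg {m : ℕ} (z : Cm m × ℂ) : 0 ≤ normz z := Real.sqrt_nonneg _

lemma normz_sq {m : ℕ} (z : Cm m × ℂ) :
    normz z ^ 2 = nsq z.1 + z.2.re ^ 2 + z.2.im ^ 2 := by
  rw [normz, Real.sq_sqrt, Complex.normSq_apply] <;>
  · have := nsq_nonneg z.1
    nlinarith [Complex.normSq_nonneg z.2, Complex.normSq_apply z.2]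

lemma im_le_normz {m : ℕ} (z : Cm m × ℂ) : z.2.im ≤ normz z := by
  have h1 : z.2.im ≤ |z.2.im| := le_abs_self _
  have h2 : |z.2.im| ^ 2 ≤ normz z ^ 2 := by
    rw [_root_.sq_abs, normz_sq]
    nlinarith [nsq_nonneg z.1, sq_nonneg z.2.re]
  nlinarith [normz_nonneg z, abs_nonneg z.2.im]

/-- two-sided bounds for `ρ(z)/|ρ(z,𝐢)|²`, and the resulting
characterization of convergence to the boundary at infinity. -/
theorem stmt2 (m : ℕ) :
    (∀ z ∈ Siegel m,
      4 * rho z / (normz z + 1) ^ 2 ≤ rho z / ‖rho2 z (iPt m)‖ ^ 2 ∧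
      rho z / ‖rho2 z (iPt m)‖ ^ 2 ≤ 4 * min (rho z) (normz z / (normz z ^ 2 + 1))) ∧
    (∀ z : ℕ → Cm m × ℂ, (∀ k, z k ∈ Siegel m) →
      (Tendsto (fun k => rho (z k) / ‖rho2 (z k) (iPt m)‖ ^ 2) atTop (nhds 0) ↔
        ∀ ε > (0 : ℝ), ∀ᶠ k in atTop, rho (z k) < ε ∨ 1 / ε < normz (z k))) := by
  have main : ∀ z ∈ Siegel m,
      4 * rho z / (normz z + 1) ^ 2 ≤ rho z / ‖rho2 z (iPt m)‖ ^ 2 ∧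
      rho z / ‖rho2 z (iPt m)‖ ^ 2 ≤ 4 * min (rho z) (normz z / (normz z ^ 2 + 1)) := by
    intro z hz
    have hρ : 0 < rho z := hz
    set x := z.2.re with hx
    set y := z.2.im with hy
    set s := nsq z.1 with hsdef
    set N := normz z with hNdef
    have hs : 0 ≤ s := nsq_nonneg z.1
    have hys : s < y := by have := hρ; rw [rho] at this; linarith
    have hy0 : 0 < y := lt_of_le_of_lt hs hys
    have hN0 : 0 ≤ N := normz_nonneg z
    have hN2 : N ^ 2 = s + x ^ 2 + y ^ 2 := normz_sq z
    have hyN : y ≤ N := im_le_normz z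
    have hρy : rho z ≤ y := by rw [rho]; linarith
    rw [rho2_iPt_sq z]
    set D := x ^ 2 + (y + 1) ^ 2 with hD
    have hD1 : 1 ≤ D := by nlinarith [sq_nonneg x]
    have hD0 : 0 < D := by linarith
    constructor
    · rw [div_le_div_iff₀ (by positivity) (by positivity)]
      have hDle : D ≤ (N + 1) ^ 2 := by nlinarith
      nlinarith [hρ.le, mul_le_mul_of_nonneg_left hDle hρ.le]
    · have heq : rho z / (D / 4) = 4 * rho z / D := by field_simp
      rw [heq, mul_min_of_nonneg _ _ (by norm_num : (0:ℝ) ≤ 4)]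
      apply le_min
      · rw [div_le_iff₀ (by positivity)]
        nlinarith [hρ.le]
        
      · rw [show (4:ℝ) * (N / (N ^ 2 + 1)) = 4 * N / (N ^ 2 + 1) by ring,
          div_le_div_iff₀ (by positivity) (by positivity)]
        have key : rho z * (N ^ 2 + 1) ≤ N * D := by
          have h1 : rho z * (N ^ 2 + 1) ≤ y * (N ^ 2 + 1) := by nlinarith
          have h2 : y * (N ^ 2 + 1) ≤ y * D := by nlinarith
          have h3 : y * D ≤ N * D := by nlinarith
          linarith
        nlinarith
  refine ⟨main, fun z hz => ?_⟩
  have hfpos : ∀ k, 0 < rho (z k) / ‖rho2 (z k) (iPt m)‖ ^ 2 := by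
    intro k
    have h1 : 0 < rho (z k) := hz k
    have h2 : 0 < ‖rho2 (z k) (iPt m)‖ ^ 2 := by
      rw [rho2_iPt_sq]
      have hys : nsq (z k).1 < (z k).2.im := by
        have := hz k; rw [Siegel, Set.mem_setOf_eq, rho] at this; linarith
      have : 0 < (z k).2.im := lt_of_le_of_lt (nsq_nonneg _) hys
      positivity
    positivity
  constructor
  · intro h ε hε
    set δ := 4 * ε / (1 / ε + 1) ^ 2 with hδdef
    have hδ : 0 < δ := by positivity
    have hev := h.eventually_lt_const hδ
    filter_upwards [hev] with k hk
    by_contra hcon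
    push_neg at hcon
    obtain ⟨h1, h2⟩ := hcon
    have hlow := (main (z k) (hz k)).1
    have hN0 : 0 ≤ normz (z k) := normz_nonneg _
    have hle : δ ≤ 4 * rho (z k) / (normz (z k) + 1) ^ 2 := by
      rw [hδdef]
      apply div_le_div₀ (by linarith [hz k]) (by linarith) (by positivity)
      nlinarith
    linarith
  · intro h
    rw [Metric.tendsto_nhds]
    intro ε hε
    filter_upwards [h (ε / 4) (by positivity)] with k hk
    have hup := (main (z k) (hz k)).2
    have hf := hfpos k
    rw [Real.dist_0_eq_abs, abs_of_pos hf]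
    have hmin : min (rho (z k)) (normz (z k) / (normz (z k) ^ 2 + 1)) < ε / 4 := by
      rcases hk with hk | hk
      · exact lt_of_le_of_lt (min_le_left _ _) hk
      · refine lt_of_le_of_lt (min_le_right _ _) ?_
        have hN : 4 / ε < normz (z k) := by
          rwa [one_div_div] at hk
        have hN0 : 0 < normz (z k) := lt_trans (by positivity) hN
        have h1 : normz (z k) / (normz (z k) ^ 2 + 1) ≤ 1 / normz (z k) := by
          rw [div_le_div_iff₀ (by positivity) hN0]
          nlinarith
        have h2 : 1 / normz (z k) < ε / 4 := by
          have h4 : 4 < normz (z k) * ε := (div_lt_iff₀ hε).mp hN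
          rw [div_lt_div_iff₀ hN0 (by norm_num : (0:ℝ) < 4)]
          linarith
        linarith
    calc rho (z k) / ‖rho2 (z k) (iPt m)‖ ^ 2
        ≤ 4 * min (rho (z k)) (normz (z k) / (normz (z k) ^ 2 + 1)) := hup
      _ < ε := by linarith
end
end

section
/- The real Jacobian determinant of the Cayley transform Φ at a point ξ of the unit ball equals 4 / |1 + ξ_n|^{2(n+1)}, and the real Jacobian of Φ^{-1} at z ∈ U equals 1 / (4 |ρ(z,𝐢)|^{2(n+1)}). -/
open Complex MeasureTheory Filter ComplexConjugate

noncomputable section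

/-- the open unit ball of ℂⁿ = ℂ^{n-1} × ℂ -/
def Ball (m : ℕ) : Set (Cm m × ℂ) := {ξ | nsq ξ.1 + Complex.normSq ξ.2 < 1}

/-- the Cayley transform Φ -/
def Phi {m : ℕ} (ξ : Cm m × ℂ) : Cm m × ℂ :=
  (fun j => ξ.1 j / (1 + ξ.2), I * (1 - ξ.2) / (1 + ξ.2))

/-- the inverse Cayley transform Φ⁻¹ -/
def Psi {m : ℕ} (z : Cm m × ℂ) : Cm m × ℂ :=
  (fun j => 2 * I * z.1 j / (I + z.2), (I - z.2) / (I + z.2))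

/-! ### Auxiliary material -/

/-- the linear map `(v, w) ↦ (c • v + w • b, d • w)` -/
def Lmap (m : ℕ) (c d : ℂ) (b : Cm m) : (Cm m × ℂ) →ₗ[ℂ] (Cm m × ℂ) where
  toFun u := (fun j => c * u.1 j + b j * u.2, d * u.2)
  map_add' u v := by ext j <;> simp <;> ring
  map_smul' a u := by ext j <;> simp <;> ring

@[simp] lemma Lmap_apply (m : ℕ) (c d : ℂ) (b : Cm m) (u : Cm m × ℂ) :
    Lmap m c d b u = (fun j => c * u.1 j + b j * u.2, d * u.2) := rfl

/-- 2×2 real matrix of multiplication by `z` in the basis `(1, I)` -/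
def M2 (z : ℂ) : Matrix (Fin 2) (Fin 2) ℝ := !![z.re, -z.im; z.im, z.re]

lemma det_M2 (z : ℂ) : (M2 z).det = Complex.normSq z := by
  simp [M2, Matrix.det_fin_two, Complex.normSq_apply]

/-- real basis of `ℂ^m`, indexed by `Fin 2 × Fin m` -/
def BR (m : ℕ) : Module.Basis (Fin 2 × Fin m) ℝ (Cm m) :=
  (Pi.basis fun _ : Fin m => Complex.basisOneI).reindex
    ((Equiv.sigmaEquivProd (Fin m) (Fin 2)).trans (Equiv.prodComm _ _))

/-- real basis of `ℂ^m × ℂ` -/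
def BB (m : ℕ) : Module.Basis ((Fin 2 × Fin m) ⊕ Fin 2) ℝ (Cm m × ℂ) :=
  (BR m).prod Complex.basisOneI

lemma BB_repr_inl (m : ℕ) (x : Cm m × ℂ) (i : Fin 2) (j : Fin m) :
    (BB m).repr x (Sum.inl (i, j)) = Complex.basisOneI.repr (x.1 j) i := by
  simp only [BB, BR]
  rw [Module.Basis.prod_repr_inl, Module.Basis.repr_reindex, Finsupp.mapDomain_equiv_apply]
  simp [Pi.basis_repr, Equiv.sigmaEquivProd]

lemma BB_repr_inr (m : ℕ) (x : Cm m × ℂ) (i : Fin 2) :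
    (BB m).repr x (Sum.inr i) = Complex.basisOneI.repr x.2 i := by
  simp [BB, Module.Basis.prod_repr_inr]

lemma BB_apply_inl (m : ℕ) (i : Fin 2) (j : Fin m) :
    BB m (Sum.inl (i, j)) = (Pi.single j (Complex.basisOneI i), 0) := by
  simp [BB, BR, Module.Basis.prod_apply, Module.Basis.reindex_apply, Pi.basis_apply, Equiv.sigmaEquivProd]

lemma BB_apply_inr (m : ℕ) (i : Fin 2) :
    BB m (Sum.inr i) = (0, Complex.basisOneI i) := by
  simp [BB, Module.Basis.prod_apply]

lemma repr_mul_basisOneI (z : ℂ) (i i' : Fin 2) :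
    Complex.basisOneI.repr (z * Complex.basisOneI i) i' = M2 z i' i := by
  fin_cases i <;> fin_cases i' <;>
    simp [M2, Complex.basisOneI, Complex.mul_I_re, Complex.mul_I_im]

/-- the real determinant of `Lmap m c d b` -/
lemma det_Lmap_real (m : ℕ) (c d : ℂ) (b : Cm m) :
    LinearMap.det ((Lmap m c d b).restrictScalars ℝ) =
      Complex.normSq c ^ m * Complex.normSq d := by
  classical
  rw [← LinearMap.det_toMatrix (BB m)]
  set A := LinearMap.toMatrix (BB m) (BB m) ((Lmap m c d b).restrictScalars ℝ) with hA
  have h11 : A.toBlocks₁₁ = Matrix.blockDiagonal (fun _ : Fin m => M2 c) := by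
    ext ⟨i', j'⟩ ⟨i, j⟩
    simp only [hA, Matrix.toBlocks₁₁, Matrix.of_apply, LinearMap.toMatrix_apply,
      LinearMap.coe_restrictScalars, BB_apply_inl, Lmap_apply, BB_repr_inl,
      Matrix.blockDiagonal_apply]
    simp only [mul_zero, add_zero]
    by_cases h : j' = j
    · subst h
      rw [Pi.single_eq_same, repr_mul_basisOneI, if_pos rfl]
    · rw [Pi.single_eq_of_ne h, if_neg h, mul_zero]
      simp
  have h21 : A.toBlocks₂₁ = 0 := by
    ext i' ⟨i, j⟩
    simp only [hA, Matrix.toBlocks₂₁, Matrix.of_apply, LinearMap.toMatrix_apply,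
      LinearMap.coe_restrictScalars, BB_apply_inl, Lmap_apply, BB_repr_inr, mul_zero,
      Matrix.zero_apply]
    simp
  have h22 : A.toBlocks₂₂ = M2 d := by
    ext i' i
    simp only [hA, Matrix.toBlocks₂₂, Matrix.of_apply, LinearMap.toMatrix_apply,
      LinearMap.coe_restrictScalars, BB_apply_inr, Lmap_apply, BB_repr_inr]
    exact repr_mul_basisOneI d i i'
  rw [← Matrix.fromBlocks_toBlocks A, h11, h21, h22, Matrix.det_fromBlocks_zero₂₁,
    Matrix.det_blockDiagonal, det_M2]
  simp [det_M2]

lemma fderiv_Phi {m : ℕ} (ξ : Cm m × ℂ) (h : (1:ℂ) + ξ.2 ≠ 0) :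
    (fderiv ℝ (Phi (m := m)) ξ : (Cm m × ℂ) →ₗ[ℝ] (Cm m × ℂ)) =
      (Lmap m ((1+ξ.2)⁻¹) (-2*I/(1+ξ.2)^2) (fun j => -(ξ.1 j)/(1+ξ.2)^2)).restrictScalars ℝ := by
  have hd : HasFDerivAt (fun u : Cm m × ℂ => (1:ℂ) + u.2)
      (ContinuousLinearMap.snd ℂ (Cm m) ℂ) ξ := by
    exact ((ContinuousLinearMap.snd ℂ (Cm m) ℂ).hasFDerivAt).const_add (1:ℂ)
  have hinv : HasFDerivAt (fun u : Cm m × ℂ => (1 + u.2)⁻¹)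
      ((-((1+ξ.2)^2)⁻¹) • ContinuousLinearMap.snd ℂ (Cm m) ℂ) ξ :=
    (hasDerivAt_inv h).comp_hasFDerivAt ξ hd
  have hj : ∀ j, HasFDerivAt (fun u : Cm m × ℂ => u.1 j * (1 + u.2)⁻¹)
      (ξ.1 j • ((-((1+ξ.2)^2)⁻¹) • ContinuousLinearMap.snd ℂ (Cm m) ℂ) +
        (1+ξ.2)⁻¹ • ((ContinuousLinearMap.proj j).comp (ContinuousLinearMap.fst ℂ (Cm m) ℂ))) ξ :=
    fun j => (((ContinuousLinearMap.proj j).comp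
      (ContinuousLinearMap.fst ℂ (Cm m) ℂ)).hasFDerivAt).mul hinv
  have hnum : HasFDerivAt (fun u : Cm m × ℂ => I * ((1:ℂ) - u.2))
      (I • ((0 : (Cm m × ℂ) →L[ℂ] ℂ) - ContinuousLinearMap.snd ℂ (Cm m) ℂ)) ξ :=
    ((hasFDerivAt_const (1:ℂ) ξ).sub (ContinuousLinearMap.snd ℂ (Cm m) ℂ).hasFDerivAt).const_mul I
  have hlast : HasFDerivAt (fun u : Cm m × ℂ => (I * (1 - u.2)) * (1+u.2)⁻¹)
      ((I*(1-ξ.2)) • ((-((1+ξ.2)^2)⁻¹) • ContinuousLinearMap.snd ℂ (Cm m) ℂ) +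
        (1+ξ.2)⁻¹ • (I • ((0 : (Cm m × ℂ) →L[ℂ] ℂ) - ContinuousLinearMap.snd ℂ (Cm m) ℂ))) ξ :=
    hnum.mul hinv
  have hPhi : HasFDerivAt (Phi (m:=m))
      ((ContinuousLinearMap.pi fun j =>
        (ξ.1 j • ((-((1+ξ.2)^2)⁻¹) • ContinuousLinearMap.snd ℂ (Cm m) ℂ) +
        (1+ξ.2)⁻¹ • ((ContinuousLinearMap.proj j).comp
          (ContinuousLinearMap.fst ℂ (Cm m) ℂ)))).prod
        ((I*(1-ξ.2)) • ((-((1+ξ.2)^2)⁻¹) • ContinuousLinearMap.snd ℂ (Cm m) ℂ) +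
        (1+ξ.2)⁻¹ • (I • ((0 : (Cm m × ℂ) →L[ℂ] ℂ) - ContinuousLinearMap.snd ℂ (Cm m) ℂ)))) ξ := by
    have hrw : Phi (m:=m) = fun u =>
        ((fun j => u.1 j * (1+u.2)⁻¹ : Cm m), (I*(1-u.2)) * (1+u.2)⁻¹) := by
      funext u
      simp only [Phi, div_eq_mul_inv]
    rw [hrw]
    exact (hasFDerivAt_pi'.mpr fun j => by
      rw [ContinuousLinearMap.proj_pi]; exact hj j).prodMk hlast
  rw [(hPhi.restrictScalars ℝ).fderiv]
  apply LinearMap.ext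
  intro u
  refine Prod.ext ?_ ?_ <;>
  · try funext j
    simp only [ContinuousLinearMap.coe_coe, ContinuousLinearMap.coe_restrictScalars',
      ContinuousLinearMap.prod_apply, ContinuousLinearMap.pi_apply,
      ContinuousLinearMap.add_apply, ContinuousLinearMap.smul_apply,
      ContinuousLinearMap.comp_apply, ContinuousLinearMap.proj_apply,
      ContinuousLinearMap.coe_fst', ContinuousLinearMap.coe_snd',
      ContinuousLinearMap.sub_apply, ContinuousLinearMap.zero_apply,
      LinearMap.coe_restrictScalars, Lmap_apply, smul_eq_mul]
    field_simp
    ring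

lemma fderiv_Psi {m : ℕ} (z : Cm m × ℂ) (h : I + z.2 ≠ 0) :
    (fderiv ℝ (Psi (m := m)) z : (Cm m × ℂ) →ₗ[ℝ] (Cm m × ℂ)) =
      (Lmap m (2*I*(I+z.2)⁻¹) (-2*I/(I+z.2)^2)
        (fun j => -(2*I*z.1 j)/(I+z.2)^2)).restrictScalars ℝ := by
  have hd : HasFDerivAt (fun u : Cm m × ℂ => I + u.2)
      (ContinuousLinearMap.snd ℂ (Cm m) ℂ) z := by
    exact ((ContinuousLinearMap.snd ℂ (Cm m) ℂ).hasFDerivAt).const_add I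
  have hinv : HasFDerivAt (fun u : Cm m × ℂ => (I + u.2)⁻¹)
      ((-((I+z.2)^2)⁻¹) • ContinuousLinearMap.snd ℂ (Cm m) ℂ) z :=
    (hasDerivAt_inv h).comp_hasFDerivAt z hd
  have hj : ∀ j, HasFDerivAt (fun u : Cm m × ℂ => (2 * I * u.1 j) * (I + u.2)⁻¹)
      ((2*I*z.1 j) • ((-((I+z.2)^2)⁻¹) • ContinuousLinearMap.snd ℂ (Cm m) ℂ) +
        (I+z.2)⁻¹ • ((2*I) • ((ContinuousLinearMap.proj j).comp
          (ContinuousLinearMap.fst ℂ (Cm m) ℂ)))) z :=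
    fun j => ((((ContinuousLinearMap.proj j).comp
      (ContinuousLinearMap.fst ℂ (Cm m) ℂ)).hasFDerivAt).const_mul (2*I)).mul hinv
  have hnum : HasFDerivAt (fun u : Cm m × ℂ => I - u.2)
      ((0 : (Cm m × ℂ) →L[ℂ] ℂ) - ContinuousLinearMap.snd ℂ (Cm m) ℂ) z :=
    (hasFDerivAt_const I z).sub (ContinuousLinearMap.snd ℂ (Cm m) ℂ).hasFDerivAt
  have hlast : HasFDerivAt (fun u : Cm m × ℂ => (I - u.2) * (I+u.2)⁻¹)
      ((I-z.2) • ((-((I+z.2)^2)⁻¹) • ContinuousLinearMap.snd ℂ (Cm m) ℂ) +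
        (I+z.2)⁻¹ • ((0 : (Cm m × ℂ) →L[ℂ] ℂ) - ContinuousLinearMap.snd ℂ (Cm m) ℂ)) z :=
    hnum.mul hinv
  have hPsi : HasFDerivAt (Psi (m:=m))
      ((ContinuousLinearMap.pi fun j =>
        ((2*I*z.1 j) • ((-((I+z.2)^2)⁻¹) • ContinuousLinearMap.snd ℂ (Cm m) ℂ) +
        (I+z.2)⁻¹ • ((2*I) • ((ContinuousLinearMap.proj j).comp
          (ContinuousLinearMap.fst ℂ (Cm m) ℂ))))).prod
        ((I-z.2) • ((-((I+z.2)^2)⁻¹) • ContinuousLinearMap.snd ℂ (Cm m) ℂ) +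
        (I+z.2)⁻¹ • ((0 : (Cm m × ℂ) →L[ℂ] ℂ) - ContinuousLinearMap.snd ℂ (Cm m) ℂ))) z := by
    have hrw : Psi (m:=m) = fun u =>
        ((fun j => (2 * I * u.1 j) * (I+u.2)⁻¹ : Cm m), (I - u.2) * (I+u.2)⁻¹) := by
      funext u
      simp only [Psi, div_eq_mul_inv]
    rw [hrw]
    exact (hasFDerivAt_pi'.mpr fun j => by
      rw [ContinuousLinearMap.proj_pi]; exact hj j).prodMk hlast
  rw [(hPsi.restrictScalars ℝ).fderiv]
  apply LinearMap.ext
  intro u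
  refine Prod.ext ?_ ?_ <;>
  · try funext j
    simp only [ContinuousLinearMap.coe_coe, ContinuousLinearMap.coe_restrictScalars',
      ContinuousLinearMap.prod_apply, ContinuousLinearMap.pi_apply,
      ContinuousLinearMap.add_apply, ContinuousLinearMap.smul_apply,
      ContinuousLinearMap.comp_apply, ContinuousLinearMap.proj_apply,
      ContinuousLinearMap.coe_fst', ContinuousLinearMap.coe_snd',
      ContinuousLinearMap.sub_apply, ContinuousLinearMap.zero_apply,
      LinearMap.coe_restrictScalars, Lmap_apply, smul_eq_mul]
    field_simp
    ring

lemma norm_pow_eq_normSq (w : ℂ) (k : ℕ) :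
    ‖w‖ ^ (2 * k) = Complex.normSq w ^ k := by
  rw [pow_mul, Complex.sq_norm]

/-- the real Jacobian determinants of Φ and Φ⁻¹
(here n = m+1, so 2(n+1) = 2(m+2)). -/
theorem stmt6 (m : ℕ) :
    (∀ ξ ∈ Ball m,
      LinearMap.det ((fderiv ℝ (Phi (m := m)) ξ : (Cm m × ℂ) →L[ℝ] (Cm m × ℂ)) :
          (Cm m × ℂ) →ₗ[ℝ] (Cm m × ℂ)) = 4 / ‖(1 : ℂ) + ξ.2‖ ^ (2 * (m + 2))) ∧
    (∀ z ∈ Siegel m,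
      LinearMap.det ((fderiv ℝ (Psi (m := m)) z : (Cm m × ℂ) →L[ℝ] (Cm m × ℂ)) :
          (Cm m × ℂ) →ₗ[ℝ] (Cm m × ℂ)) = 1 / (4 * ‖rho2 z (iPt m)‖ ^ (2 * (m + 2)))) := by
  constructor
  · intro ξ hξ
    have h : (1:ℂ) + ξ.2 ≠ 0 := by
      intro hc
      have h2 : ξ.2 = -1 := by linear_combination hc
      have := hξ
      simp only [Ball, Set.mem_setOf_eq, h2] at this
      have := nsq_nonneg ξ.1
      simp [Complex.normSq_apply] at *
      linarith
    rw [fderiv_Phi ξ h, det_Lmap_real, norm_pow_eq_normSq]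
    have ht : Complex.normSq (1 + ξ.2) ≠ 0 := by
      simpa using h
    rw [map_inv₀, map_div₀, map_pow]
    have h4 : Complex.normSq (-2 * I) = 4 := by
      simp [Complex.normSq_apply]; norm_num
    rw [h4]
    field_simp
    rw [pow_add, ← mul_assoc, ← mul_pow, one_div_mul_cancel ht, one_pow, one_mul]
  · intro z hz
    have h : I + z.2 ≠ 0 := by
      intro hc
      have h2 : z.2 = -I := by linear_combination hc
      have hrho := hz
      simp only [Siegel, Set.mem_setOf_eq, rho, h2] at hrho
      have := nsq_nonneg z.1
      simp at hrho
      linarith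
    have hrho2 : rho2 z (iPt m) = -(I/2) * (I + z.2) := by
      simp only [rho2, iPt]
      simp [Complex.conj_I]
      ring
    have hns : Complex.normSq (rho2 z (iPt m)) = Complex.normSq (I + z.2) / 4 := by
      rw [hrho2, map_mul]
      simp [Complex.normSq_apply]; norm_num
      ring
    rw [fderiv_Psi z h, det_Lmap_real, norm_pow_eq_normSq, hns]
    have ht : Complex.normSq (I + z.2) ≠ 0 := by
      simpa using h
    rw [map_div₀, map_pow, map_mul, map_mul, map_inv₀]
    have h4 : Complex.normSq (-2 * I) = 4 := by simp [Complex.normSq_apply]; norm_num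
    have h2 : Complex.normSq (2:ℂ) = 4 := by simp [Complex.normSq_apply]; norm_num
    have hI : Complex.normSq I = 1 := by simp
    rw [h4, h2, hI]
    field_simp
    rw [pow_add, ← mul_assoc, mul_assoc ((4:ℝ) ^ 2), ← mul_pow,
      show (4 / normSq (I + z.2)) * (normSq (I + z.2) / 4) = 1 by field_simp, one_pow, mul_one]
    ring
end
end

section
/- Let λ > -1 and f ∈ A_λ^1(U) (i.e. f holomorphic with ∫_U |f| dV_λ < ∞ and satisfying f = P_λ f). Then ∫_U f(z) dV_λ(z) = 0. -/
open Complex MeasureTheory Filter ComplexConjugate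

noncomputable section

namespace S11

open Topology


lemma integrable_one_add_sq {s : ℝ} (hs : 2 < s) :
    Integrable fun x : ℝ => (1 + x ^ 2) ^ (-s / 2) := by
  have hcont : Continuous fun x : ℝ => (1 + x ^ 2) ^ (-s / 2) := by
    apply Continuous.rpow_const (by continuity)
    intro x; left; positivity
  refine integrable_inv_one_add_sq.mono' hcont.aestronglyMeasurable ?_
  filter_upwards with x
  rw [Real.norm_eq_abs, _root_.abs_of_nonneg (Real.rpow_nonneg (by positivity) _)]
  calc (1 + x ^ 2) ^ (-s / 2) ≤ (1 + x ^ 2) ^ (-1 : ℝ) :=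
        Real.rpow_le_rpow_of_exponent_le (by nlinarith) (by linarith)
    _ = (1 + x ^ 2)⁻¹ := by rw [Real.rpow_neg_one]

/-- the constant `C_s` -/
def Cs (s : ℝ) : ℝ := ∫ x : ℝ, (1 + x ^ 2) ^ (-s / 2)

lemma Cs_nonneg (s : ℝ) : 0 ≤ Cs s :=
  integral_nonneg fun x => Real.rpow_nonneg (by positivity) _

lemma aux_eq {s a : ℝ} (ha : 0 < a) (u : ℝ) :
    a ^ (-s) * (1 + (u / a) ^ 2) ^ (-s / 2) = (a ^ 2 + u ^ 2) ^ (-s / 2) := by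
  have h1 : (1 + (u / a) ^ 2) = (a ^ 2 + u ^ 2) / a ^ 2 := by field_simp
  have h2 : ((a:ℝ) ^ 2) ^ (-s / 2) = a ^ (-s) := by
    rw [← Real.rpow_natCast a 2, ← Real.rpow_mul ha.le]
    congr 1; push_cast; ring
  rw [h1, Real.div_rpow (by positivity : (0:ℝ) ≤ a ^ 2 + u ^ 2) (by positivity : (0:ℝ) ≤ a ^ 2),
    h2, mul_div_cancel₀]
  positivity

lemma integrable_aux {s a : ℝ} (ha : 0 < a) (hs : 2 < s) :
    Integrable fun u : ℝ => (a ^ 2 + u ^ 2) ^ (-s / 2) := by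
  have h := ((integrable_one_add_sq hs).comp_div (R := a) ha.ne').const_mul (a ^ (-s))
  refine h.congr (Eventually.of_forall fun u => ?_)
  exact aux_eq ha u

lemma integral_aux {s a : ℝ} (ha : 0 < a) (hs : 2 < s) :
    ∫ u : ℝ, (a ^ 2 + u ^ 2) ^ (-s / 2) = a ^ (1 - s) * Cs s := by
  have h1 : ∀ u : ℝ, (a ^ 2 + u ^ 2) ^ (-s / 2)
      = a ^ (-s) * (1 + (u / a) ^ 2) ^ (-s / 2) := fun u => (aux_eq ha u).symm
  rw [integral_congr_ae (Eventually.of_forall h1), MeasureTheory.integral_const_mul,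
    MeasureTheory.Measure.integral_comp_div (fun v : ℝ => (1 + v ^ 2) ^ (-s / 2)) a]
  rw [smul_eq_mul, abs_of_pos ha, ← mul_assoc,
    show (1:ℝ) - s = 1 + -s by ring, Real.rpow_add ha, Real.rpow_one, Cs]
  ring

lemma integrable_sq_shift {s : ℝ} (a b : ℝ) (ha : 0 < a) (hs : 2 < s) :
    Integrable fun x : ℝ => (a ^ 2 + (x / 2 - b) ^ 2) ^ (-s / 2) := by
  have h1 := (integrable_aux ha hs).comp_sub_right b
  exact h1.comp_div (R := 2) two_ne_zero

lemma integral_sq_shift {s : ℝ} (a b : ℝ) (ha : 0 < a) (hs : 2 < s) :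
    ∫ x : ℝ, (a ^ 2 + (x / 2 - b) ^ 2) ^ (-s / 2) = 2 * a ^ (1 - s) * Cs s := by
  have h0 : (∫ x : ℝ, (a ^ 2 + (x / 2 - b) ^ 2) ^ (-s / 2))
      = ∫ x : ℝ, (fun u : ℝ => (a ^ 2 + (u - b) ^ 2) ^ (-s / 2)) (x / 2) := rfl
  rw [h0, MeasureTheory.Measure.integral_comp_div
    (fun u : ℝ => (a ^ 2 + (u - b) ^ 2) ^ (-s / 2)) 2]
  have h1 : (∫ u : ℝ, (a ^ 2 + (u - b) ^ 2) ^ (-s / 2))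
      = ∫ u : ℝ, (fun v : ℝ => (a ^ 2 + v ^ 2) ^ (-s / 2)) (u - b) := rfl
  rw [h1, integral_sub_right_eq_self (fun v : ℝ => (a ^ 2 + v ^ 2) ^ (-s / 2)) b,
    integral_aux ha hs, smul_eq_mul]
  norm_num; ring

lemma norm_cpow_eq {z : ℂ} (hz : 0 < z.re) (s : ℝ) :
    ‖z ^ (-(s : ℂ))‖ = (z.re ^ 2 + z.im ^ 2) ^ (-s / 2) := by
  have hz0 : z ≠ 0 := fun h => by simp [h] at hz
  rw [Complex.norm_cpow_of_ne_zero hz0]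
  simp only [Complex.neg_re, Complex.ofReal_re, Complex.neg_im, Complex.ofReal_im, neg_zero,
    mul_zero, Real.exp_zero, div_one]
  rw [Complex.norm_def, Complex.normSq_apply,
    show z.re * z.re + z.im * z.im = z.re ^ 2 + z.im ^ 2 by ring,
    Real.sqrt_eq_rpow, ← Real.rpow_mul (by positivity)]
  congr 1; ring

lemma line_re (B : ℂ) (x : ℝ) : (B - I / 2 * (x : ℂ)).re = B.re := by
  simp [Complex.div_re]

lemma line_im (B : ℂ) (x : ℝ) : (B - I / 2 * (x : ℂ)).im = B.im - x / 2 := by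
  simp [Complex.div_im]; ring

lemma norm_line_cpow {B : ℂ} (hB : 0 < B.re) (s : ℝ) (x : ℝ) :
    ‖(B - I / 2 * (x : ℂ)) ^ (-(s : ℂ))‖ = (B.re ^ 2 + (x / 2 - B.im) ^ 2) ^ (-s / 2) := by
  rw [norm_cpow_eq (by rw [line_re]; exact hB), line_re, line_im]
  rw [show (B.im - x / 2) ^ 2 = (x / 2 - B.im) ^ 2 by ring]

lemma continuous_line_cpow {B : ℂ} (hB : 0 < B.re) (c : ℂ) :
    Continuous fun x : ℝ => (B - I / 2 * (x : ℂ)) ^ c := by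
  rw [continuous_iff_continuousAt]
  intro x
  have h1 : ContinuousAt (fun z : ℂ => z ^ c) (B - I / 2 * (x : ℂ)) :=
    continuousAt_cpow_const (Complex.mem_slitPlane_iff.mpr (Or.inl (by rw [line_re]; exact hB)))
  have h2 : ContinuousAt (fun x : ℝ => B - I / 2 * (x : ℂ)) x := by fun_prop
  exact ContinuousAt.comp (f := fun x : ℝ => B - I / 2 * (x : ℂ)) h1 h2

lemma integrable_line_cpow {B : ℂ} (hB : 0 < B.re) {s : ℝ} (hs : 2 < s) :
    Integrable fun x : ℝ => (B - I / 2 * (x : ℂ)) ^ (-(s : ℂ)) := by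
  refine (integrable_sq_shift B.re B.im hB hs).mono'
    (continuous_line_cpow hB _).aestronglyMeasurable ?_
  filter_upwards with x
  rw [norm_line_cpow hB s x]

lemma tendsto_line_aux {B : ℂ} (c : ℂ) {s : ℝ} (hs : 2 < s) (hc : c.re = 1 - s) (hc2 : c.im = 0) :
    Tendsto (fun x : ℝ => ‖B - I / 2 * (x : ℂ)‖ ^ c.re) atTop (𝓝 0) ∧
    Tendsto (fun x : ℝ => ‖B - I / 2 * (x : ℂ)‖ ^ c.re) atBot (𝓝 0) := by
  have key : ∀ (l : Filter ℝ), Tendsto (fun x : ℝ => ‖B - I / 2 * (x : ℂ)‖) l atTop →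
      Tendsto (fun x : ℝ => ‖B - I / 2 * (x : ℂ)‖ ^ c.re) l (𝓝 0) := by
    intro l hl
    rw [hc, show (1 : ℝ) - s = -(s - 1) by ring]
    exact (tendsto_rpow_neg_atTop (by linarith)).comp hl
  have hbd : ∀ x : ℝ, B.im - x / 2 ≤ ‖B - I / 2 * (x : ℂ)‖ ∧
      x / 2 - B.im ≤ ‖B - I / 2 * (x : ℂ)‖ := by
    intro x
    have h1 : |B.im - x / 2| ≤ ‖B - I / 2 * (x : ℂ)‖ := by
      rw [← line_im B x]; exact Complex.abs_im_le_norm _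
    constructor
    · exact (le_abs_self _).trans h1
    · have h2 : |x / 2 - B.im| ≤ ‖B - I / 2 * (x : ℂ)‖ := by
        rw [abs_sub_comm]; exact h1
      exact (le_abs_self _).trans h2
  constructor
  · refine key _ (tendsto_atTop_mono (f := fun x : ℝ => x / 2 + -B.im) (fun x => ?_) ?_)
    · have := (hbd x).2; linarith
    · exact tendsto_atTop_add_const_right atTop (-B.im) (tendsto_id.atTop_div_const two_pos)
  · refine key _ (tendsto_atTop_mono (f := fun x : ℝ => -(x / 2) + B.im) (fun x => ?_) ?_)
    · have := (hbd x).1; linarith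
    · refine tendsto_atTop_add_const_right atBot B.im ?_
      exact tendsto_neg_atBot_atTop.comp (tendsto_id.atBot_div_const two_pos)

lemma integral_line_cpow_zero {B : ℂ} (hB : 0 < B.re) {s : ℝ} (hs : 2 < s) :
    ∫ x : ℝ, (B - I / 2 * (x : ℂ)) ^ (-(s : ℂ)) = 0 := by
  set c : ℂ := 1 - (s : ℂ) with hc
  set K : ℂ := -2 * I / ((s : ℂ) - 1) with hK
  have hs1 : (s : ℂ) - 1 ≠ 0 := by
    rw [show ((s : ℂ) - 1) = ((s - 1 : ℝ) : ℂ) by push_cast; ring]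
    exact Complex.ofReal_ne_zero.mpr (by linarith)
  have hderiv : ∀ x : ℝ, HasDerivAt (fun x : ℝ => K * (B - I / 2 * (x : ℂ)) ^ c)
      ((B - I / 2 * (x : ℂ)) ^ (-(s : ℂ))) x := by
    intro x
    have h1 : HasDerivAt (fun z : ℂ => B - I / 2 * z) (-(I / 2)) (x : ℂ) := by
      simpa using (((hasDerivAt_id (x : ℂ)).const_mul (I / 2)).const_sub B)
    have hslit : (B - I / 2 * (x : ℂ)) ∈ Complex.slitPlane :=
      Complex.mem_slitPlane_iff.mpr (Or.inl (by rw [line_re]; exact hB))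
    have h2 := HasDerivAt.cpow_const (c := c) h1 hslit
    have h3 := (HasDerivAt.const_mul K h2).comp_ofReal
    convert h3 using 1
    rw [show c - 1 = -(s : ℂ) by rw [hc]; ring]
    have hone : K * (c * -(I / 2)) = 1 := by
      rw [hK, hc]
      field_simp
      ring_nf
      simp [Complex.I_sq]
    calc (B - I / 2 * (x : ℂ)) ^ (-(s : ℂ))
        = K * (c * -(I / 2)) * (B - I / 2 * (x : ℂ)) ^ (-(s : ℂ)) := by rw [hone, one_mul]
      _ = K * (c * (B - I / 2 * (x : ℂ)) ^ (-(s : ℂ)) * -(I / 2)) := by ring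
  have hcim : c.im = 0 := by simp [hc]
  have hcre : c.re = 1 - s := by simp [hc]
  have htd := tendsto_line_aux (B := B) c hs hcre hcim
  have hnorm : ∀ x : ℝ, ‖K * (B - I / 2 * (x : ℂ)) ^ c‖
      = ‖K‖ * ‖B - I / 2 * (x : ℂ)‖ ^ c.re := by
    intro x
    have hz0 : (B - I / 2 * (x : ℂ)) ≠ 0 := by
      intro h
      have := line_re B x
      rw [h] at this; simp at this; rw [← this] at hB; exact lt_irrefl _ hB
    rw [norm_mul,
      Complex.norm_cpow_of_ne_zero hz0, hcim]
    simp
  have hzero : ∀ l : Filter ℝ,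
      Tendsto (fun x : ℝ => ‖B - I / 2 * (x : ℂ)‖ ^ c.re) l (𝓝 0) →
      Tendsto (fun x : ℝ => K * (B - I / 2 * (x : ℂ)) ^ c) l (𝓝 0) := by
    intro l hl
    rw [tendsto_zero_iff_norm_tendsto_zero]
    have : Tendsto (fun x : ℝ => ‖K‖ * ‖B - I / 2 * (x : ℂ)‖ ^ c.re) l (𝓝 (‖K‖ * 0)) :=
      hl.const_mul _
    rw [mul_zero] at this
    exact this.congr (fun x => (hnorm x).symm)
  have := integral_of_hasDerivAt_of_tendsto hderiv (integrable_line_cpow hB hs)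
    (hzero _ htd.2) (hzero _ htd.1)
  simpa using this



lemma rho2_split (m : ℕ) (z' : Cm m) (x y : ℝ) (w : Cm m × ℂ) :
    rho2 (z', (x : ℂ) + y * I) w = rho2 (z', (y : ℂ) * I) w - I / 2 * x := by
  simp only [rho2]; ring

lemma re_B_ge (m : ℕ) (z' : Cm m) (y : ℝ) (w : Cm m × ℂ) :
    (rho w + (y - nsq z')) / 2 ≤ (rho2 (z', (y : ℂ) * I) w).re := by
  have h1 : (rho2 (z', (y : ℂ) * I) w).re
      = (w.2.im + y) / 2 - ∑ j, ((z' j).re * (w.1 j).re + (z' j).im * (w.1 j).im) := by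
    simp [rho2, Complex.div_re, Complex.mul_re, Complex.re_sum, Complex.sub_re]
    ring
  rw [h1, rho, nsq, nsq]
  have h2 : ∑ j, ((z' j).re * (w.1 j).re + (z' j).im * (w.1 j).im)
      ≤ ∑ j, (Complex.normSq (z' j) + Complex.normSq (w.1 j)) / 2 := by
    apply Finset.sum_le_sum
    intro j _
    simp only [Complex.normSq_apply]
    nlinarith [sq_nonneg ((z' j).re - (w.1 j).re), sq_nonneg ((z' j).im - (w.1 j).im)]
  have h3 : ∑ j, (Complex.normSq (z' j) + Complex.normSq (w.1 j)) / 2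
      = (∑ j, Complex.normSq (z' j) + ∑ j, Complex.normSq (w.1 j)) / 2 := by
    rw [← Finset.sum_add_distrib, Finset.sum_div]
  linarith [h2.trans_eq h3]

lemma isOpen_siegel (m : ℕ) : IsOpen (Siegel m) := by
  have hc : Continuous fun z : Cm m × ℂ => rho z := by
    apply Continuous.sub
    · exact Complex.continuous_im.comp continuous_snd
    · exact continuous_finset_sum _ fun j _ =>
        Complex.continuous_normSq.comp ((continuous_apply j).comp continuous_fst)
  simpa [Siegel] using isOpen_lt continuous_const hc

lemma measurableSet_siegel (m : ℕ) : MeasurableSet (Siegel m) :=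
  (isOpen_siegel m).measurableSet

lemma continuous_B (m : ℕ) (z' : Cm m) (y : ℝ) :
    Continuous fun w : Cm m × ℂ => rho2 (z', (y : ℂ) * I) w := by
  simp only [rho2]
  apply Continuous.sub
  · exact continuous_const.mul ((Complex.continuous_conj.comp continuous_snd).sub
      continuous_const)
  · exact continuous_finset_sum _ fun j _ => continuous_const.mul
      (Complex.continuous_conj.comp ((continuous_apply j).comp continuous_fst))

lemma innerX (m : ℕ) (hm : 1 ≤ m) (lam : ℝ) (hlam : -1 < lam)
    (f : Cm m × ℂ → ℂ) (hol : ContinuousOn f (Siegel m)) (cl : ℝ)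
    (hint : Integrable (fun z => ‖f z‖ * rho z ^ lam) (volume.restrict (Siegel m)))
    (hrep : ∀ z ∈ Siegel m,
      f z = ∫ w in Siegel m,
        (cl : ℂ) * rho2 z w ^ (-(((m : ℝ) + 2 + lam : ℝ) : ℂ)) * f w *
          ((rho w ^ lam : ℝ) : ℂ))
    (z' : Cm m) (y : ℝ) (h0 : 0 < y - nsq z') :
    ∫ x : ℝ, f (z', (x : ℂ) + y * I) = 0 := by
  set s : ℝ := (m : ℝ) + 2 + lam with hsdef
  have hs : 2 < s := by
    have h1 : (1 : ℝ) ≤ (m : ℝ) := by exact_mod_cast hm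
    rw [hsdef]; linarith
  set S : Set (Cm m × ℂ) := Siegel m with hSdef
  have hS : MeasurableSet S := measurableSet_siegel m
  set B : Cm m × ℂ → ℂ := fun w => rho2 (z', (y : ℂ) * I) w with hBdef
  have hBre : ∀ w ∈ S, (y - nsq z') / 2 ≤ (B w).re := by
    intro w hw
    have h1 := re_B_ge m z' y w
    have h2 : 0 < rho w := hw
    calc (y - nsq z') / 2 ≤ (rho w + (y - nsq z')) / 2 := by linarith
      _ ≤ (B w).re := h1
  have hBpos : ∀ w ∈ S, 0 < (B w).re := fun w hw => lt_of_lt_of_le (by linarith) (hBre w hw)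
  set φ : ℝ × (Cm m × ℂ) → ℂ := fun p =>
    (cl : ℂ) * (B p.2 - I / 2 * (p.1 : ℂ)) ^ (-(s : ℂ)) * f p.2 * ((rho p.2 ^ lam : ℝ) : ℂ)
    with hφdef
  set H : ℝ × (Cm m × ℂ) → ℂ := fun p => Set.indicator (Set.univ ×ˢ S) φ p with hHdef
  have hmemiff : ∀ p : ℝ × (Cm m × ℂ), p ∈ (Set.univ ×ˢ S) ↔ p.2 ∈ S := by
    intro p; simp [Set.mem_prod]
  -- slice description
  have hslice : ∀ (x : ℝ) (w : Cm m × ℂ), H (x, w) = Set.indicator S (fun w =>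
      (cl : ℂ) * (B w - I / 2 * (x : ℂ)) ^ (-(s : ℂ)) * f w * ((rho w ^ lam : ℝ) : ℂ)) w := by
    intro x w
    by_cases hw : w ∈ S
    · rw [hHdef]
      simp only []
      rw [Set.indicator_of_mem ((hmemiff (x, w)).mpr hw), Set.indicator_of_mem hw]
    · rw [hHdef]
      simp only []
      rw [Set.indicator_of_notMem (fun hc => hw ((hmemiff (x, w)).mp hc)),
        Set.indicator_of_notMem hw]
  -- measurability of H
  have hSopen : IsOpen ((Set.univ : Set ℝ) ×ˢ S) := isOpen_univ.prod (isOpen_siegel m)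
  have hcontφ : ContinuousOn φ (Set.univ ×ˢ S) := by
    have hbase : Continuous fun p : ℝ × (Cm m × ℂ) => B p.2 - I / 2 * (p.1 : ℂ) :=
      ((continuous_B m z' y).comp continuous_snd).sub
        (continuous_const.mul (Complex.continuous_ofReal.comp continuous_fst))
    have h1 : ContinuousOn (fun p : ℝ × (Cm m × ℂ) =>
        (B p.2 - I / 2 * (p.1 : ℂ)) ^ (-(s : ℂ))) (Set.univ ×ˢ S) := by
      intro p hp
      apply ContinuousAt.continuousWithinAt
      have hmem : (B p.2 - I / 2 * (p.1 : ℂ)) ∈ Complex.slitPlane := by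
        apply Complex.mem_slitPlane_iff.mpr (Or.inl _)
        rw [line_re]
        exact hBpos p.2 ((hmemiff p).mp hp)
      exact ContinuousAt.comp (f := fun q : ℝ × (Cm m × ℂ) => B q.2 - I / 2 * (q.1 : ℂ))
        (continuousAt_cpow_const hmem) hbase.continuousAt
    have h2 : ContinuousOn (fun p : ℝ × (Cm m × ℂ) => f p.2) (Set.univ ×ˢ S) :=
      hol.comp continuous_snd.continuousOn (fun p hp => (hmemiff p).mp hp)
    have hrho : Continuous fun z : Cm m × ℂ => rho z := by
      apply Continuous.sub
      · exact Complex.continuous_im.comp continuous_snd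
      · exact continuous_finset_sum _ fun j _ =>
          Complex.continuous_normSq.comp ((continuous_apply j).comp continuous_fst)
    have h3 : ContinuousOn (fun p : ℝ × (Cm m × ℂ) => ((rho p.2 ^ lam : ℝ) : ℂ))
        (Set.univ ×ˢ S) := by
      apply Complex.continuous_ofReal.comp_continuousOn
      apply ContinuousOn.rpow_const ((hrho.comp continuous_snd).continuousOn)
      intro p hp
      exact Or.inl (ne_of_gt ((hmemiff p).mp hp))
    exact ((continuousOn_const.mul h1).mul h2).mul h3
  have hHmeas : AEStronglyMeasurable H volume := by
    rw [hHdef, aestronglyMeasurable_indicator_iff hSopen.measurableSet]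
    exact hcontφ.aestronglyMeasurable hSopen.measurableSet
  -- slice integrability in x
  have hsliceInt : ∀ w : Cm m × ℂ, Integrable (fun x => H (x, w)) volume := by
    intro w
    by_cases hw : w ∈ S
    · have heq : (fun x => H (x, w)) = fun x : ℝ =>
          (cl : ℂ) * (B w - I / 2 * (x : ℂ)) ^ (-(s : ℂ)) * f w * ((rho w ^ lam : ℝ) : ℂ) := by
        funext x; rw [hslice x w, Set.indicator_of_mem hw]
      rw [heq]
      exact (((integrable_line_cpow (hBpos w hw) hs).const_mul
        ((cl : ℂ))).mul_const (f w)).mul_const _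
    · have heq : (fun x => H (x, w)) = fun _ => (0 : ℂ) := by
        funext x; rw [hslice x w, Set.indicator_of_notMem hw]
      rw [heq]
      exact integrable_zero _ _ _
  -- value of the integral of the norm in x
  have hCs : 0 ≤ Cs s := Cs_nonneg s
  have hnormH : ∀ (x : ℝ) (w : Cm m × ℂ), w ∈ S → ‖H (x, w)‖
      = (|cl| * (‖f w‖ * rho w ^ lam)) * ((B w).re ^ 2 + (x / 2 - (B w).im) ^ 2) ^ (-s / 2) := by
    intro x w hw
    rw [hslice x w, Set.indicator_of_mem hw]
    rw [norm_mul, norm_mul, norm_mul, norm_line_cpow (hBpos w hw) s x]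
    have h1 : ‖((cl : ℝ) : ℂ)‖ = |cl| := Complex.norm_real cl
    have h2 : ‖((rho w ^ lam : ℝ) : ℂ)‖ = rho w ^ lam := by
      rw [Complex.norm_real, Real.norm_eq_abs,
        _root_.abs_of_nonneg (Real.rpow_nonneg (le_of_lt hw) lam)]
    rw [h1, h2]
    ring
  have hIntNormH : ∀ w ∈ S, (∫ x : ℝ, ‖H (x, w)‖)
      = (|cl| * (‖f w‖ * rho w ^ lam)) * (2 * (B w).re ^ (1 - s) * Cs s) := by
    intro w hw
    have h1 : (fun x : ℝ => ‖H (x, w)‖) = fun x : ℝ =>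
        (|cl| * (‖f w‖ * rho w ^ lam)) * ((B w).re ^ 2 + (x / 2 - (B w).im) ^ 2) ^ (-s / 2) :=
      funext fun x => hnormH x w hw
    rw [h1, MeasureTheory.integral_const_mul, integral_sq_shift _ _ (hBpos w hw) hs]
  set c0 : ℝ := |cl| * (2 * ((y - nsq z') / 2) ^ (1 - s) * Cs s) with hc0def
  set Φ : Cm m × ℂ → ℝ := Set.indicator S (fun w =>
    (|cl| * (‖f w‖ * rho w ^ lam)) * (2 * (B w).re ^ (1 - s) * Cs s)) with hΦdef
  have hΦeq : (fun w => ∫ x : ℝ, ‖H (x, w)‖) = Φ := by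
    funext w
    by_cases hw : w ∈ S
    · rw [hΦdef]; rw [Set.indicator_of_mem hw]; exact hIntNormH w hw
    · rw [hΦdef]; rw [Set.indicator_of_notMem hw]
      have h1 : (fun x : ℝ => ‖H (x, w)‖) = fun _ : ℝ => (0 : ℝ) := by
        funext x; rw [hslice x w, Set.indicator_of_notMem hw, norm_zero]
      rw [h1, integral_zero]
  have hrho : Continuous fun z : Cm m × ℂ => rho z := by
    apply Continuous.sub
    · exact Complex.continuous_im.comp continuous_snd
    · exact continuous_finset_sum _ fun j _ =>
        Complex.continuous_normSq.comp ((continuous_apply j).comp continuous_fst)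
  have hΦint : Integrable Φ volume := by
    have hdom : Integrable (Set.indicator S fun w => c0 * (‖f w‖ * rho w ^ lam)) volume :=
      (integrable_indicator_iff hS).mpr (hint.const_mul c0)
    have hΦmeas : AEStronglyMeasurable Φ volume := by
      rw [hΦdef, aestronglyMeasurable_indicator_iff hS]
      apply ContinuousOn.aestronglyMeasurable _ hS
      apply ContinuousOn.mul
      · apply ContinuousOn.mul continuousOn_const
        apply ContinuousOn.mul (hol.norm)
        apply ContinuousOn.rpow_const hrho.continuousOn
        intro w hw; exact Or.inl (ne_of_gt hw)
      · apply ContinuousOn.mul (ContinuousOn.mul continuousOn_const _) continuousOn_const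
        apply ContinuousOn.rpow_const
          (Complex.continuous_re.comp (continuous_B m z' y)).continuousOn
        intro w hw; exact Or.inl (ne_of_gt (hBpos w hw))
    refine hdom.mono' hΦmeas ?_
    filter_upwards with w
    by_cases hw : w ∈ S
    · rw [hΦdef, Set.indicator_of_mem hw, Set.indicator_of_mem hw]
      have hρ : (0:ℝ) ≤ rho w ^ lam := Real.rpow_nonneg (le_of_lt hw) lam
      have hBr : (0:ℝ) < (B w).re := hBpos w hw
      have h3 : (B w).re ^ (1 - s) ≤ ((y - nsq z') / 2) ^ (1 - s) :=
        Real.rpow_le_rpow_of_nonpos (by linarith) (hBre w hw) (by linarith)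
      have h4 : (0:ℝ) ≤ (B w).re ^ (1 - s) := Real.rpow_nonneg hBr.le _
      rw [Real.norm_eq_abs, _root_.abs_of_nonneg (by positivity)]
      rw [hc0def]
      nlinarith [norm_nonneg (f w), abs_nonneg cl,
        mul_le_mul_of_nonneg_left h3 (mul_nonneg (abs_nonneg cl)
          (mul_nonneg (norm_nonneg (f w)) hρ))]
    · rw [hΦdef, Set.indicator_of_notMem hw, Set.indicator_of_notMem hw, norm_zero]
  -- integrability of H on the product
  have hHprod : Integrable H ((volume : Measure ℝ).prod (volume : Measure (Cm m × ℂ))) := by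
    have hHmeas' : AEStronglyMeasurable H
        ((volume : Measure ℝ).prod (volume : Measure (Cm m × ℂ))) := by
      rwa [← MeasureTheory.Measure.volume_eq_prod ℝ (Cm m × ℂ)]
    refine (integrable_prod_iff' hHmeas').mpr ⟨?_, ?_⟩
    · filter_upwards with w; exact hsliceInt w
    · rw [hΦeq]; exact hΦint
  -- Fubini
  have hswap := MeasureTheory.integral_integral_swap (f := fun x w => H (x, w)) hHprod
  -- x-slice integrals give f
  have hfx : ∀ x : ℝ, (∫ w, H (x, w)) = f (z', (x : ℂ) + y * I) := by
    intro x
    have hz : (z', (x : ℂ) + y * I) ∈ Siegel m := by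
      show 0 < rho (z', (x : ℂ) + y * I)
      rw [rho]
      simp only [Complex.add_im, Complex.ofReal_im, Complex.mul_im, Complex.ofReal_re,
        Complex.I_im, Complex.I_re, mul_zero, mul_one, zero_add, Complex.ofReal_im]
      simpa using h0
    have h1 : (fun w => H (x, w)) = Set.indicator S (fun w =>
        (cl : ℂ) * (B w - I / 2 * (x : ℂ)) ^ (-(s : ℂ)) * f w * ((rho w ^ lam : ℝ) : ℂ)) :=
      funext (hslice x)
    rw [h1, integral_indicator hS]
    rw [hrep _ hz]
    apply setIntegral_congr_fun hS
    intro w _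
    simp only [rho2_split m z' x y]
    rfl
  -- w-slice integrals vanish
  have hwzero : ∀ w : Cm m × ℂ, (∫ x : ℝ, H (x, w)) = 0 := by
    intro w
    by_cases hw : w ∈ S
    · have heq : (fun x : ℝ => H (x, w)) = fun x : ℝ =>
          (f w * ((rho w ^ lam : ℝ) : ℂ) * (cl : ℂ)) * (B w - I / 2 * (x : ℂ)) ^ (-(s : ℂ)) := by
        funext x; rw [hslice x w, Set.indicator_of_mem hw]; ring
      rw [heq, MeasureTheory.integral_const_mul, integral_line_cpow_zero (hBpos w hw) hs,
        mul_zero]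
    · have heq : (fun x : ℝ => H (x, w)) = fun _ : ℝ => (0 : ℂ) := by
        funext x; rw [hslice x w, Set.indicator_of_notMem hw]
      rw [heq, integral_zero]
  calc ∫ x : ℝ, f (z', (x : ℂ) + y * I) = ∫ x : ℝ, ∫ w, H (x, w) := by
        apply integral_congr_ae; filter_upwards with x; rw [hfx x]
    _ = ∫ w, ∫ x : ℝ, H (x, w) := hswap
    _ = ∫ w : Cm m × ℂ, (0 : ℂ) := by
        apply integral_congr_ae; filter_upwards with w; rw [hwzero w]
    _ = 0 := integral_zero _ _
lemma rho_slice (m : ℕ) (z' : Cm m) (x y : ℝ) :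
    rho (z', (x : ℂ) + y * I) = y - nsq z' := by
  rw [rho]
  simp

lemma continuous_rho (m : ℕ) : Continuous fun z : Cm m × ℂ => rho z := by
  apply Continuous.sub
  · exact Complex.continuous_im.comp continuous_snd
  · exact continuous_finset_sum _ fun j _ =>
      Complex.continuous_normSq.comp ((continuous_apply j).comp continuous_fst)


end S11

open S11

/-- the cancellation property `∫_U f dV_λ = 0` for f ∈ A¹_λ(U)
(here n = m+1 ≥ 2). -/
theorem stmt11 (m : ℕ) (hm : 1 ≤ m) (lam : ℝ) (hlam : -1 < lam)
    (f : Cm m × ℂ → ℂ) (hol : DifferentiableOn ℂ f (Siegel m))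
    (cl : ℝ)
    (hcl : cl = Real.Gamma ((m : ℝ) + 2 + lam) /
      (4 * Real.pi ^ (m + 1) * Real.Gamma (1 + lam)))
    (hint : Integrable (fun z => ‖f z‖ * rho z ^ lam) (volume.restrict (Siegel m)))
    (hrep : ∀ z ∈ Siegel m,
      f z = ∫ w in Siegel m,
        (cl : ℂ) * rho2 z w ^ (-(((m : ℝ) + 2 + lam : ℝ) : ℂ)) * f w *
          ((rho w ^ lam : ℝ) : ℂ)) :
    (∫ z in Siegel m, ((cl * rho z ^ lam : ℝ) : ℂ) * f z) = 0 := by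
  have hS : MeasurableSet (Siegel m) := measurableSet_siegel m
  have holc : ContinuousOn f (Siegel m) := hol.continuousOn
  set G : Cm m × ℂ → ℂ :=
    Set.indicator (Siegel m) (fun z => ((cl * rho z ^ lam : ℝ) : ℂ) * f z) with hGdef
  have hGmeas : AEStronglyMeasurable G volume := by
    rw [hGdef, aestronglyMeasurable_indicator_iff hS]
    apply ContinuousOn.aestronglyMeasurable _ hS
    apply ContinuousOn.mul _ holc
    apply Complex.continuous_ofReal.comp_continuousOn
    apply ContinuousOn.mul continuousOn_const
    apply ContinuousOn.rpow_const (continuous_rho m).continuousOn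
    intro z hz; exact Or.inl (ne_of_gt hz)
  have hGint : Integrable G volume := by
    have hdom : Integrable (Set.indicator (Siegel m)
        (fun z => |cl| * (‖f z‖ * rho z ^ lam))) volume :=
      (integrable_indicator_iff hS).mpr (hint.const_mul |cl|)
    refine hdom.mono' hGmeas ?_
    filter_upwards with z
    by_cases hz : z ∈ Siegel m
    · rw [hGdef, Set.indicator_of_mem hz, Set.indicator_of_mem hz]
      have hρ : (0:ℝ) ≤ rho z ^ lam := Real.rpow_nonneg (le_of_lt hz) lam
      rw [norm_mul, Complex.norm_real, Real.norm_eq_abs, abs_mul,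
        _root_.abs_of_nonneg hρ]
      exact le_of_eq (by ring)
    · rw [hGdef, Set.indicator_of_notMem hz, Set.indicator_of_notMem hz, norm_zero]
  have hGprod : Integrable G ((volume : Measure (Cm m)).prod (volume : Measure ℂ)) := by
    rwa [← MeasureTheory.Measure.volume_eq_prod (Cm m) ℂ]
  have hstep1 : (∫ z in Siegel m, ((cl * rho z ^ lam : ℝ) : ℂ) * f z) = ∫ z, G z := by
    rw [hGdef, integral_indicator hS]
  rw [hstep1]
  have hstep2 : (∫ z, G z) = ∫ z' : Cm m, ∫ ζ : ℂ, G (z', ζ) := by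
    rw [MeasureTheory.Measure.volume_eq_prod (Cm m) ℂ]
    exact MeasureTheory.integral_prod G hGprod
  rw [hstep2]
  have hae : ∀ᵐ z' : Cm m, Integrable (fun ζ => G (z', ζ)) volume := hGprod.prod_right_ae
  have hzero : (fun z' : Cm m => ∫ ζ : ℂ, G (z', ζ)) =ᵐ[volume] (fun _ => (0 : ℂ)) := by
    filter_upwards [hae] with z' hz'
    -- pass to ℝ × ℝ
    have hmp : MeasurePreserving (Complex.measurableEquivRealProd.symm)
        (volume : Measure (ℝ × ℝ)) (volume : Measure ℂ) :=
      Complex.volume_preserving_equiv_real_prod.symm _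
    have h1 : (∫ ζ : ℂ, G (z', ζ))
        = ∫ p : ℝ × ℝ, G (z', Complex.measurableEquivRealProd.symm p) :=
      (hmp.integral_comp' (fun ζ => G (z', ζ))).symm
    have hint2 : Integrable (fun p : ℝ × ℝ => G (z', Complex.measurableEquivRealProd.symm p))
        ((volume : Measure ℝ).prod (volume : Measure ℝ)) := by
      rw [← MeasureTheory.Measure.volume_eq_prod ℝ ℝ]
      exact (hmp.integrable_comp_emb
        Complex.measurableEquivRealProd.symm.measurableEmbedding).mpr hz'
    have h2 : (∫ p : ℝ × ℝ, G (z', Complex.measurableEquivRealProd.symm p))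
        = ∫ y : ℝ, ∫ x : ℝ, G (z', Complex.measurableEquivRealProd.symm (x, y)) := by
      rw [MeasureTheory.Measure.volume_eq_prod ℝ ℝ]
      exact MeasureTheory.integral_prod_symm _ hint2
    have h3 : ∀ y x : ℝ, G (z', Complex.measurableEquivRealProd.symm (x, y))
        = G (z', (x : ℂ) + y * I) := by
      intro y x
      rw [Complex.measurableEquivRealProd_symm_apply, Complex.mk_eq_add_mul_I]
    have h4 : ∀ y : ℝ, (∫ x : ℝ, G (z', (x : ℂ) + y * I)) = 0 := by
      intro y
      by_cases hρ0 : 0 < y - nsq z'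
      · have hmem : ∀ x : ℝ, (z', (x : ℂ) + y * I) ∈ Siegel m := by
          intro x
          show 0 < rho (z', (x : ℂ) + y * I)
          rw [rho_slice]; exact hρ0
        have h5 : (fun x : ℝ => G (z', (x : ℂ) + y * I)) = fun x : ℝ =>
            ((cl * (y - nsq z') ^ lam : ℝ) : ℂ) * f (z', (x : ℂ) + y * I) := by
          funext x
          rw [hGdef, Set.indicator_of_mem (hmem x), rho_slice]
        rw [h5, MeasureTheory.integral_const_mul,
          innerX m hm lam hlam f holc cl hint hrep z' y hρ0, mul_zero]
      · have hmem : ∀ x : ℝ, (z', (x : ℂ) + y * I) ∉ Siegel m := by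
          intro x hc
          have : 0 < rho (z', (x : ℂ) + y * I) := hc
          rw [rho_slice] at this
          exact hρ0 this
        have h5 : (fun x : ℝ => G (z', (x : ℂ) + y * I)) = fun _ : ℝ => (0 : ℂ) := by
          funext x
          rw [hGdef, Set.indicator_of_notMem (hmem x)]
        rw [h5, integral_zero]
    rw [h1, h2]
    have h6 : (fun y : ℝ => ∫ x : ℝ, G (z', Complex.measurableEquivRealProd.symm (x, y)))
        = fun _ : ℝ => (0 : ℂ) := by
      funext y
      calc (∫ x : ℝ, G (z', Complex.measurableEquivRealProd.symm (x, y)))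
          = ∫ x : ℝ, G (z', (x : ℂ) + y * I) := by
            apply integral_congr_ae; filter_upwards with x; rw [h3 y x]
        _ = 0 := h4 y
    rw [h6, integral_zero]
  calc (∫ z' : Cm m, ∫ ζ : ℂ, G (z', ζ)) = ∫ z' : Cm m, (0 : ℂ) := integral_congr_ae hzero
    _ = 0 := integral_zero _ _
end
end

section
/- Let λ > -1 and α ∈ ℕ_0^n a multi-index. Define L_j = ∂_j + 2i\bar{z}_j ∂_n for 1 ≤ j ≤ n-1 and L_n = ∂_n, and L^α = L_1^{α_1}⋯L_n^{α_n}. Then applying L^α in the variable z to the Bergman kernel ρ(z,w)^{-(n+1+λ)} gives C(n,λ,α) (\bar{z'} - \bar{w'})^{α'} ρ(z,w)^{-(n+1+λ+|α|)} for some constant C(n,λ,α) depending only on n, λ, α. -/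
open Complex MeasureTheory Filter ComplexConjugate

noncomputable section

/-- Wirtinger derivative ∂_j (in a slice direction of ℂ^{n-1}),
`∂_j = ½(∂_{x_j} - i ∂_{y_j})`, via real line derivatives. -/
def Dj {m : ℕ} (j : Fin m) (g : Cm m × ℂ → ℂ) (z : Cm m × ℂ) : ℂ :=
  (1 / 2) * (lineDeriv ℝ g z (Pi.single j 1, 0) - I * lineDeriv ℝ g z (Pi.single j I, 0))

/-- Wirtinger derivative ∂ₙ in the last variable. -/
def Dn {m : ℕ} (g : Cm m × ℂ → ℂ) (z : Cm m × ℂ) : ℂ :=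
  (1 / 2) * (lineDeriv ℝ g z (0, 1) - I * lineDeriv ℝ g z (0, I))

/-- the operator `L_j = ∂_j + 2i conj(z_j) ∂ₙ` -/
def Lop {m : ℕ} (j : Fin m) (g : Cm m × ℂ → ℂ) : Cm m × ℂ → ℂ :=
  fun z => Dj j g z + 2 * I * conj (z.1 j) * Dn g z

/-- the iterated operator `L^α = L_1^{α_1} ⋯ L_{n-1}^{α_{n-1}} Lₙ^{αₙ}` -/
def Lpow {m : ℕ} (a : Fin m → ℕ) (an : ℕ) : (Cm m × ℂ → ℂ) → (Cm m × ℂ → ℂ) :=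
  ((List.ofFn fun j : Fin m => (Lop j)^[a j]).foldr (· ∘ ·) id) ∘ (Dn (m := m))^[an]


namespace Stmt18Aux


variable {m : ℕ}

def Ff (w : Cm m × ℂ) (C : ℂ) (b : Fin m → ℕ) (s : ℂ) : Cm m × ℂ → ℂ :=
  fun z => C * (∏ j, (conj (z.1 j) - conj (w.1 j)) ^ b j) * rho2 z w ^ (-s)

def good (w : Cm m × ℂ) : Set (Cm m × ℂ) := {z | 0 < (rho2 z w).re}

lemma continuous_rho2 (w : Cm m × ℂ) : Continuous fun z : Cm m × ℂ => rho2 z w := by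
  unfold rho2
  fun_prop

lemma isOpen_good (w : Cm m × ℂ) : IsOpen (good w) :=
  isOpen_lt continuous_const (Complex.continuous_re.comp (continuous_rho2 w))

lemma mem_good {w z : Cm m × ℂ} (hw : w ∈ Siegel m) (hz : z ∈ Siegel m) : z ∈ good w := by
  have hre : (rho2 z w).re = (z.2.im + w.2.im) / 2 - ∑ j, (z.1 j * conj (w.1 j)).re := by
    simp [rho2, Complex.re_sum, Complex.mul_re, Complex.div_re, Complex.div_im,
      Complex.normSq_apply]
    ring
  have hb : ∀ j : Fin m, (z.1 j * conj (w.1 j)).re ≤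
      (Complex.normSq (z.1 j) + Complex.normSq (w.1 j)) / 2 := by
    intro j
    have h := Complex.normSq_nonneg (z.1 j - w.1 j)
    rw [Complex.normSq_sub] at h
    linarith
  have hsum := Finset.sum_le_sum (fun j (_ : j ∈ Finset.univ) => hb j)
  have hz' : 0 < rho z := hz
  have hw' : 0 < rho w := hw
  unfold rho nsq at hz' hw'
  have hsplit : ∑ j, (Complex.normSq (z.1 j) + Complex.normSq (w.1 j)) / 2
      = ((∑ j, Complex.normSq (z.1 j)) + ∑ j, Complex.normSq (w.1 j)) / 2 := by
    rw [← Finset.sum_div, Finset.sum_add_distrib]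
  show 0 < (rho2 z w).re
  rw [hre]
  rw [hsplit] at hsum
  linarith




lemma hasDerivAt_affine (A B : ℂ) : HasDerivAt (fun t : ℝ => A + ↑t * B) B 0 := by
  have h := (Complex.ofRealCLM.hasDerivAt (x := (0:ℝ))).mul_const B
  simpa using h.const_add A

lemma hasDerivAt_line_pow (c d : ℂ) (k : ℕ) :
    HasDerivAt (fun t : ℝ => (c + ↑t * d) ^ k) ((k : ℂ) * c ^ (k - 1) * d) 0 := by
  have h2 : HasDerivAt (fun y : ℂ => y ^ k) ((k : ℂ) * c ^ (k - 1)) (c + ((0:ℝ):ℂ) * d) := by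
    simpa using hasDerivAt_pow k c
  exact HasDerivAt.comp (0:ℝ) h2 (hasDerivAt_affine c d)

lemma hasDerivAt_line_cpow (A B s : ℂ) (hA : 0 < A.re) :
    HasDerivAt (fun t : ℝ => (A + ↑t * B) ^ (-s)) (-s * A ^ (-s - 1) * B) 0 := by
  have h2 : HasDerivAt (fun y : ℂ => y ^ (-s)) (-s * A ^ (-s - 1)) (A + ((0:ℝ):ℂ) * B) := by
    have := (Complex.hasStrictDerivAt_cpow_const (c := -s) (x := A)
      (Complex.mem_slitPlane_iff.mpr (Or.inl hA))).hasDerivAt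
    simpa using this
  exact HasDerivAt.comp (0:ℝ) h2 (hasDerivAt_affine A B)

variable {m : ℕ}

lemma lineDeriv_Ff_n (w z : Cm m × ℂ) (C : ℂ) (b : Fin m → ℕ) (s : ℂ)
    (hz : 0 < (rho2 z w).re) (c : ℂ) :
    lineDeriv ℝ (Ff w C b s) z ((0 : Cm m), c) =
      C * (∏ j, (conj (z.1 j) - conj (w.1 j)) ^ b j) *
        (-s * rho2 z w ^ (-s - 1) * (-(I / 2) * c)) := by
  have hfun : (fun t : ℝ => Ff w C b s (z + t • ((0 : Cm m), c))) =
      fun t : ℝ => (C * ∏ j, (conj (z.1 j) - conj (w.1 j)) ^ b j) *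
        (rho2 z w + ↑t * (-(I / 2) * c)) ^ (-s) := by
    funext t
    have h1 : (z + t • ((0 : Cm m), c)).1 = z.1 := by simp
    have h2 : (z + t • ((0 : Cm m), c)).2 = z.2 + ↑t * c := by simp [Complex.real_smul]
    simp only [Ff, h1, h2, rho2]
    congr 2
    ring
  have hd := (hasDerivAt_line_cpow (rho2 z w) (-(I / 2) * c) s hz).const_mul
      (C * ∏ j, (conj (z.1 j) - conj (w.1 j)) ^ b j)
  have hld : HasLineDerivAt ℝ (Ff w C b s)
      (C * (∏ j, (conj (z.1 j) - conj (w.1 j)) ^ b j) *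
        (-s * rho2 z w ^ (-s - 1) * (-(I / 2) * c))) z ((0 : Cm m), c) := by
    show HasDerivAt (fun t : ℝ => Ff w C b s (z + t • ((0 : Cm m), c))) _ 0
    rw [hfun]
    convert hd using 1
  exact hld.lineDeriv


lemma lineDeriv_Ff_j (w z : Cm m × ℂ) (C : ℂ) (b : Fin m → ℕ) (s : ℂ)
    (hz : 0 < (rho2 z w).re) (j : Fin m) (c : ℂ) :
    lineDeriv ℝ (Ff w C b s) z (Pi.single j c, 0) =
      C * (((b j : ℂ) * (conj (z.1 j) - conj (w.1 j)) ^ (b j - 1) * conj c) *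
          ∏ i ∈ Finset.univ.erase j, (conj (z.1 i) - conj (w.1 i)) ^ b i) * rho2 z w ^ (-s)
      + C * (∏ i, (conj (z.1 i) - conj (w.1 i)) ^ b i) *
          (-s * rho2 z w ^ (-s - 1) * (-(c * conj (w.1 j)))) := by
  set Q : ℂ := ∏ i ∈ Finset.univ.erase j, (conj (z.1 i) - conj (w.1 i)) ^ b i with hQ
  set δ : ℂ := conj (z.1 j) - conj (w.1 j) with hδ
  have hfun : (fun t : ℝ => Ff w C b s (z + t • ((Pi.single j c : Cm m), 0))) =
      fun t : ℝ => C * ((δ + ↑t * conj c) ^ b j * Q *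
        (rho2 z w + ↑t * (-(c * conj (w.1 j)))) ^ (-s)) := by
    funext t
    have h1 : ∀ i, (z + t • ((Pi.single j c : Cm m), 0)).1 i
        = z.1 i + ↑t * (Pi.single j c : Cm m) i := by
      intro i; simp [Complex.real_smul]
    have h2 : (z + t • ((Pi.single j c : Cm m), 0)).2 = z.2 := by simp
    have hprod : ∏ i, (conj ((z + t • ((Pi.single j c : Cm m), 0)).1 i) - conj (w.1 i)) ^ b i
        = (δ + ↑t * conj c) ^ b j * Q := by
      rw [← Finset.mul_prod_erase Finset.univ _ (Finset.mem_univ j)]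
      congr 1
      · rw [h1 j, Pi.single_eq_same]
        simp only [map_add, map_mul, Complex.conj_ofReal]
        rw [hδ]
        ring_nf
      · apply Finset.prod_congr rfl
        intro i hi
        rw [h1 i, Pi.single_eq_of_ne (Finset.ne_of_mem_erase hi)]
        simp
    have hsum : ∑ i, (z + t • ((Pi.single j c : Cm m), 0)).1 i * conj (w.1 i)
        = (∑ i, z.1 i * conj (w.1 i)) + ↑t * (c * conj (w.1 j)) := by
      have : ∀ i, (z + t • ((Pi.single j c : Cm m), 0)).1 i * conj (w.1 i)
          = z.1 i * conj (w.1 i) + ↑t * ((Pi.single j c : Cm m) i * conj (w.1 i)) := by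
        intro i; rw [h1 i]; ring
      rw [Finset.sum_congr rfl fun i _ => this i, Finset.sum_add_distrib]
      congr 1
      rw [← Finset.mul_sum]
      congr 1
      rw [Finset.sum_eq_single j]
      · simp
      · intro i _ hij
        rw [Pi.single_eq_of_ne (by exact hij)]
        simp
      · simp
    simp only [Ff, rho2, h2, hprod, hsum]
    rw [mul_assoc]
    congr 3
    ring
  have hpow := hasDerivAt_line_pow δ (conj c) (b j)
  have hcpow := hasDerivAt_line_cpow (rho2 z w) (-(c * conj (w.1 j))) s hz
  have hd := ((hpow.mul_const Q).mul hcpow).const_mul C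
  have hld : HasLineDerivAt ℝ (Ff w C b s)
      (C * (((b j : ℂ) * δ ^ (b j - 1) * conj c) * Q) * rho2 z w ^ (-s)
        + C * (∏ i, (conj (z.1 i) - conj (w.1 i)) ^ b i) *
          (-s * rho2 z w ^ (-s - 1) * (-(c * conj (w.1 j))))) z ((Pi.single j c : Cm m), 0) := by
    show HasDerivAt (fun t : ℝ => Ff w C b s (z + t • ((Pi.single j c : Cm m), 0))) _ 0
    rw [hfun]
    have hPQ : (∏ i, (conj (z.1 i) - conj (w.1 i)) ^ b i) = δ ^ b j * Q := by
      rw [← Finset.mul_prod_erase Finset.univ _ (Finset.mem_univ j)]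
    rw [hPQ]
    convert hd using 1
    · rfl
    · rfl
    simp only [Complex.ofReal_zero, zero_mul, add_zero, mul_zero]
    ring
  exact hld.lineDeriv
open Topology

lemma lineDeriv_congr {g f : Cm m × ℂ → ℂ} {U : Set (Cm m × ℂ)} (hU : IsOpen U)
    {z : Cm m × ℂ} (hz : z ∈ U) (h : Set.EqOn g f U) (v : Cm m × ℂ) :
    lineDeriv ℝ g z v = lineDeriv ℝ f z v := by
  have hc : Continuous fun t : ℝ => z + t • v := by fun_prop
  have ht : Tendsto (fun t : ℝ => z + t • v) (𝓝 0) (𝓝 z) := by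
    simpa using hc.tendsto 0
  have hev : (fun t : ℝ => g (z + t • v)) =ᶠ[𝓝 (0:ℝ)] fun t => f (z + t • v) := by
    filter_upwards [ht.eventually_mem (hU.mem_nhds hz)] with t htU using h htU
  unfold lineDeriv
  exact hev.deriv_eq

lemma Dn_congr {g f : Cm m × ℂ → ℂ} {U : Set (Cm m × ℂ)} (hU : IsOpen U)
    {z : Cm m × ℂ} (hz : z ∈ U) (h : Set.EqOn g f U) : Dn g z = Dn f z := by
  unfold Dn
  rw [lineDeriv_congr hU hz h, lineDeriv_congr hU hz h]

lemma Lop_congr {g f : Cm m × ℂ → ℂ} {U : Set (Cm m × ℂ)} (hU : IsOpen U)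
    {z : Cm m × ℂ} (hz : z ∈ U) (h : Set.EqOn g f U) (j : Fin m) :
    Lop j g z = Lop j f z := by
  unfold Lop Dj
  rw [lineDeriv_congr hU hz h, lineDeriv_congr hU hz h, Dn_congr hU hz h]

lemma Dn_Ff (w z : Cm m × ℂ) (C : ℂ) (b : Fin m → ℕ) (s : ℂ)
    (hz : 0 < (rho2 z w).re) :
    Dn (Ff w C b s) z = Ff w (C * (I * s / 2)) b (s + 1) z := by
  have h1 := lineDeriv_Ff_n w z C b s hz 1
  have h2 := lineDeriv_Ff_n w z C b s hz I
  rw [Dn, h1, h2]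
  simp only [Ff]
  rw [show (-(s + 1)) = -s - 1 by ring]
  linear_combination (-(s * C * (∏ j, (conj (z.1 j) - conj (w.1 j)) ^ b j) *
    rho2 z w ^ (-s - 1) * I) / 4) * Complex.I_mul_I

lemma Lop_Ff (w z : Cm m × ℂ) (C : ℂ) (b : Fin m → ℕ) (s : ℂ)
    (hz : 0 < (rho2 z w).re) (j : Fin m) :
    Lop j (Ff w C b s) z = Ff w (C * (-s)) (b + Pi.single j 1) (s + 1) z := by
  have h1 := lineDeriv_Ff_j w z C b s hz j 1
  have h2 := lineDeriv_Ff_j w z C b s hz j I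
  simp only [Complex.conj_I, map_one] at h1 h2
  have hDn := Dn_Ff w z C b s hz
  rw [Lop, Dj, h1, h2, hDn]
  simp only [Ff]
  have hprod : ∏ i, (conj (z.1 i) - conj (w.1 i)) ^ ((b + Pi.single j 1 : Fin m → ℕ) i)
      = (conj (z.1 j) - conj (w.1 j)) * ∏ i, (conj (z.1 i) - conj (w.1 i)) ^ b i := by
    simp only [Pi.add_apply, pow_add]
    rw [Finset.prod_mul_distrib]
    have hone : ∏ i, (conj (z.1 i) - conj (w.1 i)) ^ (Pi.single j (1:ℕ) i)
        = conj (z.1 j) - conj (w.1 j) := by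
      rw [Finset.prod_eq_single j]
      · simp
      · intro i _ hij
        rw [Pi.single_eq_of_ne hij]
        simp
      · simp
    rw [hone]
    ring
  rw [hprod, show (-(s + 1)) = -s - 1 by ring]
  linear_combination ((C * ((b j : ℂ) * (conj (z.1 j) - conj (w.1 j)) ^ (b j - 1)) *
      (∏ i ∈ Finset.univ.erase j, (conj (z.1 i) - conj (w.1 i)) ^ b i) * rho2 z w ^ (-s)) / 2
    - s * conj (w.1 j) * C * (∏ i, (conj (z.1 i) - conj (w.1 i)) ^ b i) *
        rho2 z w ^ (-s - 1) / 2
    + s * conj (z.1 j) * C * (∏ i, (conj (z.1 i) - conj (w.1 i)) ^ b i) *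
        rho2 z w ^ (-s - 1)) * Complex.I_mul_I
def Nice (T : (Cm m × ℂ → ℂ) → (Cm m × ℂ → ℂ)) (d : Fin m → ℕ) (t : ℕ) : Prop :=
  ∀ (C : ℂ) (b : Fin m → ℕ) (s : ℂ), ∃ C' : ℂ, ∀ (w : Cm m × ℂ) (g : Cm m × ℂ → ℂ),
    Set.EqOn g (Ff w C b s) (good w) →
      Set.EqOn (T g) (Ff w C' (b + d) (s + (t : ℂ))) (good w)

lemma nice_id : Nice (m := m) id 0 0 := by
  intro C b s
  refine ⟨C, fun w g hg z hz => ?_⟩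
  simpa [Ff] using hg hz

lemma nice_comp {T₁ T₂ : (Cm m × ℂ → ℂ) → (Cm m × ℂ → ℂ)} {d₁ d₂ : Fin m → ℕ} {t₁ t₂ : ℕ}
    (h₁ : Nice T₁ d₁ t₁) (h₂ : Nice T₂ d₂ t₂) : Nice (T₁ ∘ T₂) (d₂ + d₁) (t₂ + t₁) := by
  intro C b s
  obtain ⟨C₂, hC₂⟩ := h₂ C b s
  obtain ⟨C₁, hC₁⟩ := h₁ C₂ (b + d₂) (s + (t₂ : ℂ))
  refine ⟨C₁, fun w g hg z hz => ?_⟩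
  have h := hC₁ w (T₂ g) (hC₂ w g hg) hz
  rw [show b + (d₂ + d₁) = b + d₂ + d₁ from (add_assoc b d₂ d₁).symm,
    show (s + ((t₂ + t₁ : ℕ) : ℂ)) = s + (t₂ : ℂ) + (t₁ : ℂ) by push_cast; ring]
  exact h

lemma nice_iter {T : (Cm m × ℂ → ℂ) → (Cm m × ℂ → ℂ)} {d : Fin m → ℕ} {t : ℕ}
    (h : Nice T d t) : ∀ k : ℕ, Nice T^[k] (k • d) (k * t) := by
  intro k
  induction k with
  | zero => simpa using nice_id
  | succ k ih =>
      have hh := nice_comp h ih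
      rw [Function.iterate_succ', succ_nsmul, Nat.succ_mul]
      exact hh

lemma nice_Dn : Nice (m := m) Dn 0 1 := by
  intro C b s
  refine ⟨C * (I * s / 2), fun w g hg z hz => ?_⟩
  have h1 : Dn g z = Dn (Ff w C b s) z := Dn_congr (isOpen_good w) hz hg
  rw [h1, Dn_Ff w z C b s hz]
  norm_num [Ff]

lemma nice_Lop (j : Fin m) : Nice (Lop j) (Pi.single j 1) 1 := by
  intro C b s
  refine ⟨C * (-s), fun w g hg z hz => ?_⟩
  have h1 : Lop j g z = Lop j (Ff w C b s) z := Lop_congr (isOpen_good w) hz hg j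
  rw [h1, Lop_Ff w z C b s hz j]
  norm_num

lemma nice_foldr (a : Fin m → ℕ) : ∀ l : List (Fin m),
    Nice ((l.map fun j => (Lop j)^[a j]).foldr (· ∘ ·) id)
      ((l.map fun j => a j • Pi.single j (1:ℕ)).sum) ((l.map fun j => a j).sum)
  | [] => by simpa using nice_id
  | (j :: l) => by
      have h := nice_comp (nice_iter (nice_Lop j) (a j)) (nice_foldr a l)
      simp only [List.map_cons, List.foldr_cons, List.sum_cons]
      rw [show (a j • Pi.single j (1:ℕ)) + (l.map fun j => a j • Pi.single j (1:ℕ)).sum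
          = (l.map fun j => a j • Pi.single j (1:ℕ)).sum + a j • Pi.single j (1:ℕ)
        from add_comm _ _,
        show a j + (l.map fun j => a j).sum = (l.map fun j => a j).sum + a j * 1 by omega]
      exact h

end Stmt18Aux

/-- `L^α` applied to the Bergman kernel `ρ(z,w)^{-(n+1+λ)}`
produces `C(n,λ,α) (conj z' - conj w')^{α'} ρ(z,w)^{-(n+1+λ+|α|)}`
(here n = m+1, |α| = Σ_j α_j + αₙ). -/
theorem stmt18 (m : ℕ) (lam : ℝ) (hlam : -1 < lam) (a : Fin m → ℕ) (an : ℕ) :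
    ∃ C : ℂ, ∀ w ∈ Siegel m, ∀ z ∈ Siegel m,
      Lpow a an (fun z => rho2 z w ^ (-(((m : ℝ) + 2 + lam : ℝ) : ℂ))) z =
        C * (∏ j, (conj (z.1 j) - conj (w.1 j)) ^ (a j)) *
          rho2 z w ^ (-(((m : ℝ) + 2 + lam + (∑ j, a j : ℕ) + (an : ℝ) : ℝ) : ℂ)) := by
  classical
  set s0 : ℂ := (((m : ℝ) + 2 + lam : ℝ) : ℂ) with hs0
  have hfold := Stmt18Aux.nice_foldr a (List.finRange m)
  have hmain := Stmt18Aux.nice_comp hfold (Stmt18Aux.nice_iter Stmt18Aux.nice_Dn an)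
  obtain ⟨C, hC⟩ := hmain 1 0 s0
  refine ⟨C, fun w hw z hz => ?_⟩
  have hgood := Stmt18Aux.mem_good hw hz
  have hker : Set.EqOn (fun z => rho2 z w ^ (-s0)) (Stmt18Aux.Ff w 1 0 s0)
      (Stmt18Aux.good w) := fun z _ => by simp [Stmt18Aux.Ff]
  have hthis := hC w _ hker hgood
  have hb : ((0 : Fin m → ℕ) + (an • (0 : Fin m → ℕ)
      + ((List.finRange m).map fun j => a j • Pi.single j (1:ℕ)).sum)) = a := by
    rw [smul_zero, zero_add, zero_add, ← List.ofFn_eq_map, List.sum_ofFn]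
    funext i
    simp [Pi.single_apply]
  have hLs : ((List.finRange m).map fun j => a j).sum = ∑ j, a j := by
    rw [← List.ofFn_eq_map, List.sum_ofFn]
  rw [Lpow, List.ofFn_eq_map]
  rw [hthis]
  simp only [Stmt18Aux.Ff, hb]
  congr 1
  rw [hLs]
  push_cast [hs0]
  ring
end
end
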